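/- arXiv:1610.07177 — 2 statements merged into one kernel-verified Lean document; each statement's English description precedes it below -/
import Mathlib

section
/- If G is a (2K₂, diamond)-free graph with clique number ω ≥ 3, then χ(G) = ω. -/
open SimpleGraph

/-- `H` occurs as an induced subgraph of `G`. -/
def IsInducedCopy {α β : Type*} (H : SimpleGraph α) (G : SimpleGraph β) : Prop :=
  ∃ f : α ↪ β, ∀ a b : α, G.Adj (f a) (f b) ↔ H.Adj a b

/-- `G` is `H`-free: no induced copy of `H`. -/
def Free {α β : Type*} (G : SimpleGraph α) (H : SimpleGraph β) : Prop :=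
  ¬ IsInducedCopy H G

/-- `P₃ ∪ P₂`: disjoint union of a path on 3 vertices and an edge. -/
def P3UP2 : SimpleGraph (Fin 5) :=
  SimpleGraph.fromRel (fun a b => (a, b) ∈ [((0 : Fin 5), (1 : Fin 5)), (1, 2), (3, 4)])

/-- The diamond: `K₄` minus an edge. -/
def diamondG : SimpleGraph (Fin 4) :=
  SimpleGraph.fromRel (fun a b =>
    (a, b) ∈ [((0 : Fin 4), (2 : Fin 4)), (0, 3), (1, 2), (1, 3), (2, 3)])

/-- `2K₂`: two disjoint edges. -/
def twoK2 : SimpleGraph (Fin 4) :=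
  SimpleGraph.fromRel (fun a b => (a, b) ∈ [((0 : Fin 4), (1 : Fin 4)), (2, 3)])

/-- `P₄ ∪ P₂`. -/
def P4UP2 : SimpleGraph (Fin 6) :=
  SimpleGraph.fromRel (fun a b =>
    (a, b) ∈ [((0 : Fin 6), (1 : Fin 6)), (1, 2), (2, 3), (4, 5)])

/-- The cycle on `n` vertices (for `n ≥ 3`), as a graph on `ZMod n`. -/
def cycG (n : ℕ) : SimpleGraph (ZMod n) :=
  SimpleGraph.fromRel (fun a b => b = a + 1)

/-- A graph is perfect if every induced subgraph has chromatic number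
equal to its clique number. -/
def IsPerfect {V : Type*} (G : SimpleGraph V) : Prop :=
  ∀ s : Set V, (G.induce s).chromaticNumber = ((G.induce s).cliqueNum : ℕ∞)

/-- The set `C_{ij}` attached to a maximum clique enumerated by `f : Fin ω ↪ V`:
vertices outside the clique, non-adjacent to both `f i` and `f j`, where `(i,j)`
is the lexicographically least such pair (this closed form is equivalent to the
iterative definition removing earlier `C`-sets). -/
def Cset {V : Type*} (G : SimpleGraph V) {ω : ℕ} (f : Fin ω ↪ V) (i j : Fin ω) : Set V :=
  {v | v ∉ Set.range f ∧ ¬ G.Adj v (f i) ∧ ¬ G.Adj v (f j) ∧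
    ∀ p q : Fin ω, p < q → ¬ G.Adj v (f p) → ¬ G.Adj v (f q) →
      i < p ∨ (i = p ∧ j ≤ q)}

/-- The set `I_a` attached to a maximum clique enumerated by `f : Fin ω ↪ V`:
vertices outside the clique adjacent to every clique vertex except `f k`. -/
def Iset {V : Type*} (G : SimpleGraph V) {ω : ℕ} (f : Fin ω ↪ V) (k : Fin ω) : Set V :=
  {v | v ∉ Set.range f ∧ ¬ G.Adj v (f k) ∧ ∀ l : Fin ω, l ≠ k → G.Adj v (f l)}

lemma no_twoK2 {V : Type*} (G : SimpleGraph V) (h1 : _root_.Free G twoK2) {a b c d : V}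
    (hab : G.Adj a b) (hcd : G.Adj c d)
    (hac : ¬ G.Adj a c) (had : ¬ G.Adj a d) (hbc : ¬ G.Adj b c) (hbd : ¬ G.Adj b d)
    (nac : a ≠ c) (nad : a ≠ d) (nbc : b ≠ c) (nbd : b ≠ d) : False := by
  have hab' := hab.symm
  have hcd' := hcd.symm
  have hca : ¬ G.Adj c a := fun h => hac h.symm
  have hda : ¬ G.Adj d a := fun h => had h.symm
  have hcb : ¬ G.Adj c b := fun h => hbc h.symm
  have hdb : ¬ G.Adj d b := fun h => hbd h.symm
  apply h1
  refine ⟨⟨![a, b, c, d], ?_⟩, ?_⟩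
  · intro i j hij
    fin_cases i <;> fin_cases j <;>
      simp_all [hab.ne, hab.ne', hcd.ne, hcd.ne', nac.symm, nad.symm, nbc.symm, nbd.symm]
  · intro i j
    change G.Adj (![a, b, c, d] i) (![a, b, c, d] j) ↔ _
    fin_cases i <;> fin_cases j <;>
      simp_all [twoK2, SimpleGraph.fromRel_adj, G.irrefl, hab.ne, hab.ne', hcd.ne, hcd.ne',
        nac, nad, nbc, nbd, nac.symm, nad.symm, nbc.symm, nbd.symm]

lemma no_diamond {V : Type*} (G : SimpleGraph V) (h2 : _root_.Free G diamondG) {x a b c : V}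
    (hab : G.Adj a b) (hac : G.Adj a c) (hbc : G.Adj b c)
    (hxa : G.Adj x a) (hxb : G.Adj x b) (hxc : ¬ G.Adj x c) (nxc : x ≠ c) : False := by
  have hcx : ¬ G.Adj c x := fun h => hxc h.symm
  apply h2
  refine ⟨⟨![x, c, a, b], ?_⟩, ?_⟩
  · intro i j hij
    fin_cases i <;> fin_cases j <;>
      simp_all [hab.ne, hab.ne', hac.ne, hac.ne', hbc.ne, hbc.ne', hxa.ne, hxa.ne',
        hxb.ne, hxb.ne', nxc.symm]
  · intro i j
    change G.Adj (![x, c, a, b] i) (![x, c, a, b] j) ↔ _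
    fin_cases i <;> fin_cases j <;>
      simp_all [diamondG, SimpleGraph.fromRel_adj, G.irrefl, hab.symm, hac.symm, hbc.symm,
        hxa.symm, hxb.symm, nxc, nxc.symm, hab.ne, hab.ne', hac.ne, hac.ne', hbc.ne, hbc.ne',
        hxa.ne, hxa.ne', hxb.ne, hxb.ne']

theorem stmt18 {V : Type*} [Fintype V] (G : SimpleGraph V) (h1 : _root_.Free G twoK2)
    (h2 : _root_.Free G diamondG) (hω : 3 ≤ G.cliqueNum) :
    G.chromaticNumber = (G.cliqueNum : ℕ∞) := by
  classical
  obtain ⟨s, hs⟩ := G.exists_isNClique_cliqueNum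
  set ω := G.cliqueNum with hωdef
  have hcard : s.card = ω := hs.card_eq
  have hclique : G.IsClique (s : Set V) := hs.isClique
  have hω0 : 0 < ω := by omega
  -- maximality: every vertex outside s misses some vertex of s
  have hmax : ∀ v ∉ s, ∃ a ∈ s, ¬ G.Adj v a := by
    intro v hv
    by_contra hcon
    push_neg at hcon
    have hins : G.IsClique ((insert v s : Finset V) : Set V) := by
      intro x hx y hy hxy
      simp only [Finset.coe_insert, Set.mem_insert_iff, Finset.mem_coe] at hx hy
      rcases hx with rfl | hx <;> rcases hy with rfl | hy
      · exact absurd rfl hxy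
      · exact hcon y hy
      · exact (hcon x hx).symm
      · exact hclique hx hy hxy
    have hle : (insert v s).card ≤ ω := IsClique.card_le_cliqueNum (tc := hins)
    rw [Finset.card_insert_of_notMem hv, hcard] at hle
    omega
  -- (A): each outside vertex has at most one neighbor in s
  have hA : ∀ v ∉ s, ∀ a ∈ s, ∀ b ∈ s, G.Adj v a → G.Adj v b → a = b := by
    intro v hv a ha b hb hva hvb
    by_contra hab
    obtain ⟨z, hz, hvz⟩ := hmax v hv
    have hza : z ≠ a := fun h => hvz (h ▸ hva)
    have hzb : z ≠ b := fun h => hvz (h ▸ hvb)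
    exact no_diamond G h2 (hclique ha hb hab) (hclique ha hz hza.symm)
      (hclique hb hz hzb.symm) hva hvb hvz (fun h => hv (h ▸ hz))
  -- (B): the endpoints of an outside edge have distinct neighbors in s
  have hB : ∀ v ∉ s, ∀ w ∉ s, G.Adj v w →
      ∃ a ∈ s, ∃ b ∈ s, G.Adj v a ∧ G.Adj w b ∧ a ≠ b := by
    intro v hv w hw hvw
    by_contra hcon
    push_neg at hcon
    -- a single vertex z absorbs all s-neighbors of v and w
    have hnv : s.Nonempty := by
      rw [← Finset.card_pos, hcard]; omega
    have hz : ∃ z, ∀ x ∈ s, (G.Adj v x ∨ G.Adj w x) → x = z := by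
      by_cases hev : ∃ a ∈ s, G.Adj v a
      · obtain ⟨a, ha, hva⟩ := hev
        refine ⟨a, fun x hx hadj => ?_⟩
        rcases hadj with h | h
        · exact hA v hv x hx a ha h hva
        · exact (hcon a ha x hx hva h).symm
      · by_cases hew : ∃ b ∈ s, G.Adj w b
        · obtain ⟨b, hb, hwb⟩ := hew
          refine ⟨b, fun x hx hadj => ?_⟩
          rcases hadj with h | h
          · exact absurd ⟨x, hx, h⟩ hev
          · exact hA w hw x hx b hb h hwb
        · exact ⟨hnv.choose, fun x hx hadj => by
            rcases hadj with h | h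
            · exact absurd ⟨x, hx, h⟩ hev
            · exact absurd ⟨x, hx, h⟩ hew⟩
    obtain ⟨z, hzabs⟩ := hz
    have hcard2 : 1 < (s.erase z).card := by
      have := Finset.card_erase_le (a := z) (s := s)
      have h2' := Finset.pred_card_le_card_erase (a := z) (s := s)
      omega
    obtain ⟨a, ha, b, hb, hab⟩ := Finset.one_lt_card.mp hcard2
    have ha' : a ∈ s := Finset.mem_of_mem_erase ha
    have hb' : b ∈ s := Finset.mem_of_mem_erase hb
    have haz : a ≠ z := Finset.ne_of_mem_erase ha
    have hbz : b ≠ z := Finset.ne_of_mem_erase hb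
    have hva : ¬ G.Adj v a := fun h => haz (hzabs a ha' (Or.inl h))
    have hwa : ¬ G.Adj w a := fun h => haz (hzabs a ha' (Or.inr h))
    have hvb : ¬ G.Adj v b := fun h => hbz (hzabs b hb' (Or.inl h))
    have hwb : ¬ G.Adj w b := fun h => hbz (hzabs b hb' (Or.inr h))
    exact no_twoK2 G h1 hvw (hclique ha' hb' hab) hva hvb hwa hwb
      (fun h => hv (h ▸ ha')) (fun h => hv (h ▸ hb'))
      (fun h => hw (h ▸ ha')) (fun h => hw (h ▸ hb'))
  -- arithmetic helpers for the cyclic shift on Fin ω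
  have keyinj : ∀ a b : ℕ, a < ω → b < ω → (a + 1) % ω = (b + 1) % ω → a = b := by
    intro a b ha hb hab
    rcases Nat.lt_or_ge (a + 1) ω with h | h
    · rw [Nat.mod_eq_of_lt h] at hab
      rcases Nat.lt_or_ge (b + 1) ω with h' | h'
      · rw [Nat.mod_eq_of_lt h'] at hab; omega
      · have hb1 : b + 1 = ω := by omega
        rw [hb1, Nat.mod_self] at hab; omega
    · have ha1 : a + 1 = ω := by omega
      rw [ha1, Nat.mod_self] at hab
      rcases Nat.lt_or_ge (b + 1) ω with h' | h'
      · rw [Nat.mod_eq_of_lt h'] at hab; omega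
      · omega
    -- last case: a+1=ω and b+1=ω
  have keyne : ∀ a : ℕ, a < ω → (a + 1) % ω ≠ a := by
    intro a ha
    rcases Nat.lt_or_ge (a + 1) ω with h | h
    · rw [Nat.mod_eq_of_lt h]; omega
    · have : a + 1 = ω := by omega
      rw [this, Nat.mod_self]; omega
  let e : {x // x ∈ s} ≃ Fin ω := s.equivFinOfCardEq hcard
  let rot : Fin ω → Fin ω := fun i => ⟨(i.val + 1) % ω, Nat.mod_lt _ hω0⟩
  have rotinj : Function.Injective rot := by
    intro i j hij
    have := congrArg Fin.val hij
    exact Fin.ext (keyinj i.val j.val i.isLt j.isLt this)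
  have rotne : ∀ i : Fin ω, rot i ≠ i := by
    intro i h
    exact keyne i.val i.isLt (congrArg Fin.val h)
  let c : V → Fin ω := fun v =>
    if h : v ∈ s then e ⟨v, h⟩
    else if h2 : ∃ a, a ∈ s ∧ G.Adj v a then rot (e ⟨h2.choose, h2.choose_spec.1⟩)
    else ⟨0, hω0⟩
  have hchoose : ∀ (v : V), v ∉ s → ∀ (hex : ∃ a, a ∈ s ∧ G.Adj v a) (u : V) (hu : u ∈ s),
      G.Adj v u → e ⟨hex.choose, hex.choose_spec.1⟩ = e ⟨u, hu⟩ := by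
    intro v hv hex u hu hvu
    exact congrArg e (Subtype.ext
      (hA v hv hex.choose hex.choose_spec.1 u hu hex.choose_spec.2 hvu))
  have hprop : ∀ v w, G.Adj v w → c v ≠ c w := by
    intro v w hvw hcvw
    by_cases hv : v ∈ s <;> by_cases hw : w ∈ s
    · simp only [c, dif_pos hv, dif_pos hw] at hcvw
      exact hvw.ne (congrArg Subtype.val (e.injective hcvw))
    · have hex : ∃ a, a ∈ s ∧ G.Adj w a := ⟨v, hv, hvw.symm⟩
      simp only [c, dif_pos hv, dif_neg hw, dif_pos hex] at hcvw
      rw [hchoose w hw hex v hv hvw.symm] at hcvw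
      exact rotne (e ⟨v, hv⟩) hcvw.symm
    · have hex : ∃ a, a ∈ s ∧ G.Adj v a := ⟨w, hw, hvw⟩
      simp only [c, dif_neg hv, dif_pos hw, dif_pos hex] at hcvw
      rw [hchoose v hv hex w hw hvw] at hcvw
      exact rotne (e ⟨w, hw⟩) hcvw
    · obtain ⟨a, ha, b, hb, hva, hwb, hab⟩ := hB v hv w hw hvw
      have hexv : ∃ x, x ∈ s ∧ G.Adj v x := ⟨a, ha, hva⟩
      have hexw : ∃ x, x ∈ s ∧ G.Adj w x := ⟨b, hb, hwb⟩
      simp only [c, dif_neg hv, dif_neg hw, dif_pos hexv, dif_pos hexw] at hcvw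
      rw [hchoose v hv hexv a ha hva, hchoose w hw hexw b hb hwb] at hcvw
      exact hab (congrArg Subtype.val (e.injective (rotinj hcvw)))
  have hcol : G.Colorable ω := ⟨Coloring.mk c (fun {v w} hvw => hprop v w hvw)⟩
  refine le_antisymm hcol.chromaticNumber_le ?_
  have := hclique.card_le_chromaticNumber
  rwa [hcard] at this
end

section
/- If G is a (2K₂, diamond)-free graph with clique number ω ≥ 4, then G is perfect. -/
open SimpleGraph

/-! ### Auxiliary lemmas -/

lemma diamond_of {V : Type*} (G : SimpleGraph V) {v c a b : V}
    (hvc : v ≠ c) (hvcn : ¬ G.Adj v c)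
    (hva : G.Adj v a) (hvb : G.Adj v b)
    (hca : G.Adj c a) (hcb : G.Adj c b) (hab : G.Adj a b) :
    IsInducedCopy diamondG G := by
  have h1 : v ≠ a := hva.ne
  have h2 : v ≠ b := hvb.ne
  have h3 : c ≠ a := hca.ne
  have h4 : c ≠ b := hcb.ne
  have h5 : a ≠ b := hab.ne
  refine ⟨⟨![v, c, a, b], ?_⟩, ?_⟩
  · intro i j hij
    fin_cases i <;> fin_cases j <;> simp_all
  · intro i j
    show G.Adj (![v, c, a, b] i) (![v, c, a, b] j) ↔ diamondG.Adj i j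
    fin_cases i <;> fin_cases j <;>
      simp_all [diamondG, SimpleGraph.fromRel_adj, G.adj_comm, G.irrefl]

lemma twoK2_of {V : Type*} (G : SimpleGraph V) {u v a b : V}
    (hua : u ≠ a) (hub : u ≠ b) (hva : v ≠ a) (hvb : v ≠ b)
    (huv : G.Adj u v) (hab : G.Adj a b)
    (h1 : ¬ G.Adj u a) (h2 : ¬ G.Adj u b) (h3 : ¬ G.Adj v a) (h4 : ¬ G.Adj v b) :
    IsInducedCopy twoK2 G := by
  have h5 : u ≠ v := huv.ne
  have h6 : a ≠ b := hab.ne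
  refine ⟨⟨![u, v, a, b], ?_⟩, ?_⟩
  · intro i j hij
    fin_cases i <;> fin_cases j <;> simp_all
  · intro i j
    show G.Adj (![u, v, a, b] i) (![u, v, a, b] j) ↔ twoK2.Adj i j
    fin_cases i <;> fin_cases j <;>
      simp_all [twoK2, SimpleGraph.fromRel_adj, G.adj_comm, G.irrefl]

lemma cliqueNum_le_chrom {W : Type*} [Fintype W] (H : SimpleGraph W) :
    (H.cliqueNum : ℕ∞) ≤ H.chromaticNumber := by
  by_contra h
  push_neg at h
  obtain ⟨c, hc⟩ := H.exists_isNClique_cliqueNum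
  exact (cliqueFree_of_chromaticNumber_lt h) c hc

def finshift {m : ℕ} (a : Fin m) : Fin m :=
  ⟨(a.val + 1) % m, Nat.mod_lt _ a.pos⟩

lemma finshift_ne {m : ℕ} (hm : 2 ≤ m) (a : Fin m) : finshift a ≠ a := by
  intro h
  have hv : (a.val + 1) % m = a.val := congrArg Fin.val h
  rcases Nat.lt_or_ge (a.val + 1) m with h1 | h1
  · rw [Nat.mod_eq_of_lt h1] at hv; omega
  · have h2 : a.val + 1 = m := le_antisymm a.isLt h1
    rw [h2, Nat.mod_self] at hv
    omega

theorem stmt19 {V : Type*} [Fintype V] (G : SimpleGraph V) (h1 : _root_.Free G twoK2)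
    (h2 : _root_.Free G diamondG) (hω : 4 ≤ G.cliqueNum) : IsPerfect G := by
  classical
  obtain ⟨t, ht⟩ := G.exists_isNClique_cliqueNum
  have htc : G.IsClique ↑t := ht.isClique
  have ht4 : 4 ≤ t.card := by rw [ht.card_eq]; exact hω
  -- every vertex outside `t` has a non-neighbor in `t`
  have hmax : ∀ v ∉ t, ∃ c ∈ t, ¬ G.Adj v c := by
    intro v hv
    by_contra hcon
    push_neg at hcon
    have hcl : G.IsClique ↑(insert v t) := by
      rw [Finset.coe_insert]
      exact htc.insert fun b hb _ => hcon b hb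
    have hle : (insert v t).card ≤ G.cliqueNum :=
      IsClique.card_le_cliqueNum (tc := hcl)
    rw [Finset.card_insert_of_notMem hv, ht.card_eq] at hle
    omega
  -- every vertex outside `t` has at most one neighbor in `t`
  have L1 : ∀ v ∉ t, ∀ a ∈ t, ∀ b ∈ t, a ≠ b → G.Adj v a → G.Adj v b → False := by
    intro v hv a ha b hb hab hva hvb
    obtain ⟨c, hc, hvc⟩ := hmax v hv
    have hca : c ≠ a := by rintro rfl; exact hvc hva
    have hcb : c ≠ b := by rintro rfl; exact hvc hvb
    have hvne : v ≠ c := by rintro rfl; exact hv hc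
    exact h2 (diamond_of G hvne hvc hva hvb
      (htc (Finset.mem_coe.2 hc) (Finset.mem_coe.2 ha) hca)
      (htc (Finset.mem_coe.2 hc) (Finset.mem_coe.2 hb) hcb)
      (htc (Finset.mem_coe.2 ha) (Finset.mem_coe.2 hb) hab))
  -- vertices outside `t` are pairwise non-adjacent
  have S2 : ∀ u ∉ t, ∀ v ∉ t, ¬ G.Adj u v := by
    intro u hu v hv huv
    have hAu : (t.filter (fun x => G.Adj u x)).card ≤ 1 := by
      rw [Finset.card_le_one]
      intro a ha b hb
      rw [Finset.mem_filter] at ha hb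
      by_contra hne
      exact L1 u hu a ha.1 b hb.1 hne ha.2 hb.2
    have hAv : (t.filter (fun x => G.Adj v x)).card ≤ 1 := by
      rw [Finset.card_le_one]
      intro a ha b hb
      rw [Finset.mem_filter] at ha hb
      by_contra hne
      exact L1 v hv a ha.1 b hb.1 hne ha.2 hb.2
    have hsub : (t.filter (fun x => G.Adj u x)) ∪ (t.filter (fun x => G.Adj v x)) ⊆ t :=
      Finset.union_subset (Finset.filter_subset _ _) (Finset.filter_subset _ _)
    have hcards : 1 < (t \ ((t.filter (fun x => G.Adj u x)) ∪ (t.filter (fun x => G.Adj v x)))).card := by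
      have hc1 := Finset.card_sdiff_of_subset hsub
      have hc2 := Finset.card_union_le (t.filter (fun x => G.Adj u x)) (t.filter (fun x => G.Adj v x))
      have hc3 := Finset.card_le_card hsub
      omega
    obtain ⟨a, ha, b, hb, hab⟩ := Finset.one_lt_card.1 hcards
    rw [Finset.mem_sdiff] at ha hb
    have hat := ha.1
    have hbt := hb.1
    have hnua : ¬ G.Adj u a := fun h =>
      ha.2 (Finset.mem_union_left _ (Finset.mem_filter.2 ⟨hat, h⟩))
    have hnub : ¬ G.Adj u b := fun h =>
      hb.2 (Finset.mem_union_left _ (Finset.mem_filter.2 ⟨hbt, h⟩))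
    have hnva : ¬ G.Adj v a := fun h =>
      ha.2 (Finset.mem_union_right _ (Finset.mem_filter.2 ⟨hat, h⟩))
    have hnvb : ¬ G.Adj v b := fun h =>
      hb.2 (Finset.mem_union_right _ (Finset.mem_filter.2 ⟨hbt, h⟩))
    have hua : u ≠ a := by rintro rfl; exact hu hat
    have hub : u ≠ b := by rintro rfl; exact hu hbt
    have hva : v ≠ a := by rintro rfl; exact hv hat
    have hvb : v ≠ b := by rintro rfl; exact hv hbt
    exact h1 (twoK2_of G hua hub hva hvb huv
      (htc (Finset.mem_coe.2 hat) (Finset.mem_coe.2 hbt) hab) hnua hnub hnva hnvb)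
  -- now prove perfection
  intro s
  haveI : Fintype ↥s := Fintype.ofFinite _
  refine le_antisymm ?_ (cliqueNum_le_chrom (G.induce s))
  rw [chromaticNumber_le_iff_colorable]
  set H : SimpleGraph ↥s := G.induce s with hHdef
  have hadj : ∀ x y : ↥s, H.Adj x y → G.Adj ↑x ↑y := fun x y h => h
  set K' : Finset ↥s := Finset.univ.filter (fun x => (x : V) ∈ t) with hK'
  have memK' : ∀ x : ↥s, x ∈ K' ↔ (x : V) ∈ t := by
    intro x; simp [hK']
  have hK'cl : H.IsClique ↑K' := by
    intro x hx y hy hxy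
    have hx' := (memK' x).1 (Finset.mem_coe.1 hx)
    have hy' := (memK' y).1 (Finset.mem_coe.1 hy)
    have hne : (x : V) ≠ (y : V) := fun h => hxy (Subtype.ext h)
    exact htc (Finset.mem_coe.2 hx') (Finset.mem_coe.2 hy') hne
  have hmle : K'.card ≤ H.cliqueNum := IsClique.card_le_cliqueNum (tc := hK'cl)
  by_cases hm2 : 2 ≤ K'.card
  · -- clique part has at least two vertices: color with K'.card colors
    refine Colorable.mono hmle ?_
    have hpos : 0 < K'.card := by omega
    let e := K'.equivFin
    let f : ↥s → Fin K'.card := fun x =>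
      if hx : x ∈ K' then e ⟨x, hx⟩
      else if hex : ∃ k ∈ K', H.Adj x k then finshift (e ⟨hex.choose, hex.choose_spec.1⟩)
      else ⟨0, hpos⟩
    have key : ∀ x y : ↥s, H.Adj x y → x ∈ K' → y ∉ K' → f x ≠ f y := by
      intro x y hxy hx hy heq
      have hex : ∃ k ∈ K', H.Adj y k := ⟨x, hx, hxy.symm⟩
      have hcx : hex.choose = x := by
        by_contra hne
        have hh1 : (hex.choose : V) ∈ t := (memK' _).1 hex.choose_spec.1
        have hh2 : (x : V) ∈ t := (memK' _).1 hx
        have hh3 : (y : V) ∉ t := fun h => hy ((memK' y).2 h)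
        have hne' : (hex.choose : V) ≠ (x : V) := fun h => hne (Subtype.ext h)
        exact L1 (y : V) hh3 _ hh1 _ hh2 hne' (hadj _ _ hex.choose_spec.2) (hadj _ _ hxy.symm)
      have hsub : (⟨hex.choose, hex.choose_spec.1⟩ : ↥K') = ⟨x, hx⟩ := Subtype.ext hcx
      have hfy : f y = finshift (e ⟨x, hx⟩) := by
        show (if hx' : y ∈ K' then e ⟨y, hx'⟩
          else if hex' : ∃ k ∈ K', H.Adj y k then finshift (e ⟨hex'.choose, hex'.choose_spec.1⟩)
          else ⟨0, hpos⟩) = finshift (e ⟨x, hx⟩)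
        rw [dif_neg hy, dif_pos hex, hsub]
      have hfx : f x = e ⟨x, hx⟩ := by
        show (if hx' : x ∈ K' then e ⟨x, hx'⟩
          else if hex' : ∃ k ∈ K', H.Adj x k then finshift (e ⟨hex'.choose, hex'.choose_spec.1⟩)
          else ⟨0, hpos⟩) = e ⟨x, hx⟩
        rw [dif_pos hx]
      rw [hfx, hfy] at heq
      exact finshift_ne hm2 _ heq.symm
    refine ⟨Coloring.mk f ?_⟩
    intro x y hxy heq
    by_cases hx : x ∈ K' <;> by_cases hy : y ∈ K'
    · have hfx : f x = e ⟨x, hx⟩ := dif_pos hx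
      have hfy : f y = e ⟨y, hy⟩ := dif_pos hy
      rw [hfx, hfy] at heq
      have := e.injective heq
      exact hxy.ne (Subtype.ext_iff.1 this)
    · exact key x y hxy hx hy heq
    · exact key y x hxy.symm hy hx heq.symm
    · have hxt : (x : V) ∉ t := fun h => hx ((memK' x).2 h)
      have hyt : (y : V) ∉ t := fun h => hy ((memK' y).2 h)
      exact S2 _ hxt _ hyt (hadj _ _ hxy)
  · by_cases hedge : ∃ x y : ↥s, H.Adj x y
    · obtain ⟨x, y, hxy⟩ := hedge
      have h2le : 2 ≤ H.cliqueNum := by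
        have hcl : H.IsClique ↑({x, y} : Finset ↥s) := by
          rw [Finset.coe_insert, Finset.coe_singleton]
          exact isClique_pair.2 fun _ => hxy
        have := IsClique.card_le_cliqueNum (tc := hcl)
        rwa [Finset.card_pair hxy.ne] at this
      refine Colorable.mono h2le
        ⟨Coloring.mk (fun z => if (z : V) ∈ t then (0 : Fin 2) else 1) ?_⟩
      intro a b hab heq
      by_cases hat : (a : V) ∈ t <;> by_cases hbt : (b : V) ∈ t
      · exact absurd (Finset.one_lt_card.2
          ⟨a, (memK' a).2 hat, b, (memK' b).2 hbt, hab.ne⟩) (by omega)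
      · simp [hat, hbt] at heq
      · simp [hat, hbt] at heq
      · exact S2 _ hat _ hbt (hadj _ _ hab)
    · push_neg at hedge
      rcases isEmpty_or_nonempty ↥s with he | hne
      · exact Colorable.of_isEmpty (G := H) _
      · obtain ⟨x⟩ := hne
        have h1le : 1 ≤ H.cliqueNum := by
          have hcl : H.IsClique ↑({x} : Finset ↥s) := by
            rw [Finset.coe_singleton]
            exact isClique_singleton x
          have := IsClique.card_le_cliqueNum (tc := hcl)
          rwa [Finset.card_singleton] at this
        refine Colorable.mono h1le ⟨Coloring.mk (fun _ => (0 : Fin 1)) ?_⟩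
        intro a b hab
        exact absurd hab (hedge a b)
end
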